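/- arXiv:1512.04798 — 2 statements merged into one kernel-verified Lean document; each statement's English description precedes it below -/
import Mathlib

section
/- Let f : [θ₁, θ₂] → ℝ be a C¹ function with 0 < θ₁ < θ₂ < π, and define g(θ) := sin(θ)·f(θ). Then ∫_{θ₁}^{θ₂} (g'(θ))²/sin(θ) dθ = ∫_{θ₁}^{θ₂} f(θ)²/sin(θ) dθ + ∫_{θ₁}^{θ₂} sin(θ)·(f'(θ))² dθ, provided f vanishes at θ₁ and θ₂. -/
open Real MeasureTheory intervalIntegral

/-- For a `C¹` function `f` on `[θ₁, θ₂] ⊆ (0, π)` vanishing at the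
endpoints, with `g θ = sin θ * f θ`, one has
`∫ (g')²/sin = ∫ f²/sin + ∫ sin (f')²`. -/
theorem weighted_integration_identity
    (θ₁ θ₂ : ℝ) (hθ₁ : 0 < θ₁) (hθ : θ₁ < θ₂) (hθ₂ : θ₂ < Real.pi)
    (f : ℝ → ℝ) (hf : ContDiffOn ℝ 1 f (Set.Icc θ₁ θ₂))
    (hf₁ : f θ₁ = 0) (hf₂ : f θ₂ = 0)
    (g : ℝ → ℝ) (hg : g = fun θ => Real.sin θ * f θ) :
    ∫ θ in θ₁..θ₂, (deriv g θ) ^ 2 / Real.sin θ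
      = (∫ θ in θ₁..θ₂, (f θ) ^ 2 / Real.sin θ)
        + ∫ θ in θ₁..θ₂, Real.sin θ * (deriv f θ) ^ 2 := by
  have hle : θ₁ ≤ θ₂ := hθ.le
  have huIcc : Set.uIcc θ₁ θ₂ = Set.Icc θ₁ θ₂ := Set.uIcc_of_le hle
  have huD : UniqueDiffOn ℝ (Set.Icc θ₁ θ₂) := uniqueDiffOn_Icc hθ
  set F : ℝ → ℝ := derivWithin f (Set.Icc θ₁ θ₂) with hFdef
  have hFc : ContinuousOn F (Set.Icc θ₁ θ₂) := hf.continuousOn_derivWithin huD le_rfl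
  have hfc : ContinuousOn f (Set.Icc θ₁ θ₂) := hf.continuousOn
  have hsin : ∀ θ ∈ Set.Icc θ₁ θ₂, 0 < Real.sin θ := fun θ hθ' =>
    Real.sin_pos_of_pos_of_lt_pi (lt_of_lt_of_le hθ₁ hθ'.1) (lt_of_le_of_lt hθ'.2 hθ₂)
  have hder : ∀ θ ∈ Set.Ioo θ₁ θ₂, HasDerivAt f (F θ) θ := by
    intro θ hθ'
    have h1 : Set.Icc θ₁ θ₂ ∈ nhds θ := Icc_mem_nhds hθ'.1 hθ'.2
    exact ((hf.differentiableOn one_ne_zero θ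
      (Set.Ioo_subset_Icc_self hθ')).hasDerivWithinAt).hasDerivAt h1
  have hgder : ∀ θ ∈ Set.Ioo θ₁ θ₂,
      HasDerivAt g (Real.cos θ * f θ + Real.sin θ * F θ) θ := by
    intro θ hθ'
    rw [hg]
    exact (Real.hasDerivAt_sin θ).mul (hder θ hθ')
  have hIoo_ae : ∀ᵐ x : ℝ, x ∈ Set.uIoc θ₁ θ₂ → x ∈ Set.Ioo θ₁ θ₂ := by
    have h0 : (volume : Measure ℝ) {θ₂} = 0 := measure_singleton θ₂
    filter_upwards [measure_eq_zero_iff_ae_notMem.mp h0] with x hx hxI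
    rw [Set.uIoc_of_le hle] at hxI
    exact ⟨hxI.1, lt_of_le_of_ne hxI.2 hx⟩
  have hL : (∫ θ in θ₁..θ₂, (deriv g θ) ^ 2 / Real.sin θ)
      = ∫ θ in θ₁..θ₂, (Real.cos θ * f θ + Real.sin θ * F θ) ^ 2 / Real.sin θ := by
    apply intervalIntegral.integral_congr_ae
    filter_upwards [hIoo_ae] with x hx hxI
    rw [(hgder x (hx hxI)).deriv]
  have hR : (∫ θ in θ₁..θ₂, Real.sin θ * (deriv f θ) ^ 2)
      = ∫ θ in θ₁..θ₂, Real.sin θ * (F θ) ^ 2 := by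
    apply intervalIntegral.integral_congr_ae
    filter_upwards [hIoo_ae] with x hx hxI
    rw [(hder x (hx hxI)).deriv]
  rw [hL, hR]
  -- pointwise identity on the interval
  have hpt : Set.EqOn (fun θ => (Real.cos θ * f θ + Real.sin θ * F θ) ^ 2 / Real.sin θ)
      (fun θ => ((f θ) ^ 2 / Real.sin θ + Real.sin θ * (F θ) ^ 2)
        + (-Real.sin θ * (f θ) ^ 2 + Real.cos θ * (2 * f θ * F θ)))
      (Set.uIcc θ₁ θ₂) := by
    intro θ hθ'
    rw [huIcc] at hθ'
    have hs := (hsin θ hθ').ne'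
    have hsq := Real.sin_sq_add_cos_sq θ
    field_simp
    nlinarith [hsq, sq_nonneg (f θ)]
  rw [intervalIntegral.integral_congr hpt]
  -- integrability of the pieces
  have hi1 : IntervalIntegrable (fun θ => (f θ) ^ 2 / Real.sin θ) volume θ₁ θ₂ := by
    apply ContinuousOn.intervalIntegrable
    rw [huIcc]
    exact ((hfc.pow 2).div Real.continuousOn_sin (fun θ hθ' => (hsin θ hθ').ne'))
  have hi2 : IntervalIntegrable (fun θ => Real.sin θ * (F θ) ^ 2) volume θ₁ θ₂ := by
    apply ContinuousOn.intervalIntegrable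
    rw [huIcc]
    exact Real.continuousOn_sin.mul (hFc.pow 2)
  have hi3 : IntervalIntegrable
      (fun θ => -Real.sin θ * (f θ) ^ 2 + Real.cos θ * (2 * f θ * F θ)) volume θ₁ θ₂ := by
    apply ContinuousOn.intervalIntegrable
    rw [huIcc]
    exact (Real.continuousOn_sin.neg.mul (hfc.pow 2)).add
      (Real.continuousOn_cos.mul ((continuousOn_const.mul hfc).mul hFc))
  rw [intervalIntegral.integral_add (hi1.add hi2) hi3,
    intervalIntegral.integral_add hi1 hi2]
  -- the cross term integrates to zero
  have hHder : ∀ θ ∈ Set.Ioo θ₁ θ₂,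
      HasDerivAt (fun θ => Real.cos θ * (f θ) ^ 2)
        (-Real.sin θ * (f θ) ^ 2 + Real.cos θ * (2 * f θ * F θ)) θ := by
    intro θ hθ'
    have h1 : HasDerivAt (fun θ => (f θ) ^ 2) (2 * f θ * F θ) θ := by
      have := (hder θ hθ').fun_pow 2
      simpa [mul_comm, mul_assoc, mul_left_comm] using this
    exact (Real.hasDerivAt_cos θ).mul h1
  have hHcont : ContinuousOn (fun θ => Real.cos θ * (f θ) ^ 2) (Set.Icc θ₁ θ₂) :=
    Real.continuousOn_cos.mul (hfc.pow 2)
  have hzero : (∫ θ in θ₁..θ₂,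
      (-Real.sin θ * (f θ) ^ 2 + Real.cos θ * (2 * f θ * F θ))) = 0 := by
    rw [intervalIntegral.integral_eq_sub_of_hasDerivAt_of_le hle hHcont hHder hi3]
    simp [hf₁, hf₂]
  rw [hzero, add_zero]
end

section
/- (PDE for the auxiliary function.) Let u satisfy div(x₁∇u) = 0 in {u > 0} ∩ {x₁ > 0} and div((1/x₁)∇u) = 0 in {u < 0} ∩ {x₁ > 0} in an open set of ℝ²₊. Define z(x) := x₁u⁺(x) on {u > 0} and z(x) := u⁻(x) on {u ≤ 0}. Then z satisfies the single equation Δz − (1/x₁)∂₁z + x₁^{−2}z⁺ = 0 in {x₁ > 0} (in each phase, classically). -/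
open Real MeasureTheory Set Filter Metric Topology
open scoped RealInnerProductSpace

noncomputable section

/-- The plane `ℝ²` as a Euclidean space; the half-plane is `{x | 0 < x 0}`. -/
abbrev E2 := EuclideanSpace ℝ (Fin 2)

/-- Standard basis vectors of `ℝ²`. -/
def e2 (i : Fin 2) : E2 := EuclideanSpace.single i 1

/-- Divergence of a vector field on `ℝ²`. -/
def div2 (F : E2 → E2) (x : E2) : ℝ :=
  ∑ i, fderiv ℝ (fun y => F y i) x (e2 i)

/-- The gradient of `u` on the positive phase `{u > 0}` (the quantity `∇u⁺`),
extended by `0` elsewhere. -/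
def gp (u : E2 → ℝ) (x : E2) : E2 := if 0 < u x then gradient u x else 0

/-- The gradient of `u` on the negative phase `{u < 0}` (the quantity `∇u⁻`),
extended by `0` elsewhere. -/
def gm (u : E2 → ℝ) (x : E2) : E2 := if u x < 0 then gradient u x else 0

/-- `u` solves the two-phase degenerate system `div(x₁∇u) = 0` in `{u > 0}`,
`div((1/x₁)∇u) = 0` in `{u < 0}` in `Ω ∩ {x₁ > 0}`, with the continuity/regularity
and vanishing-flux conditions on `Ω ∩ {x₁ = 0}`. -/
def SolvesEHD (u : E2 → ℝ) (Ω : Set E2) : Prop :=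
  ContinuousOn u (Ω ∩ {x : E2 | 0 < x 0}) ∧
  ContDiffOn ℝ 2 u (Ω ∩ {x : E2 | 0 < x 0} ∩ {x : E2 | u x ≠ 0}) ∧
  (∀ x ∈ Ω ∩ {x : E2 | 0 < x 0} ∩ {x : E2 | 0 < u x},
    div2 (fun y => y 0 • gradient u y) x = 0) ∧
  (∀ x ∈ Ω ∩ {x : E2 | 0 < x 0} ∩ {x : E2 | u x < 0},
    div2 (fun y => (y 0)⁻¹ • gradient u y) x = 0) ∧
  (∀ p ∈ Ω, p 0 = 0 →
    Tendsto (fun x => x 0 * u x * fderiv ℝ u x (e2 0))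
      (nhdsWithin p (Ω ∩ {x : E2 | 0 < u x})) (nhds 0) ∧
    Tendsto (fun x => u x * fderiv ℝ u x (e2 0) / x 0)
      (nhdsWithin p (Ω ∩ {x : E2 | u x < 0})) (nhds 0))

end

noncomputable section

/-- The Laplacian on `ℝ²`. -/
def lap2 (z : E2 → ℝ) (x : E2) : ℝ :=
  ∑ i, fderiv ℝ (fun y => fderiv ℝ z y (e2 i)) x (e2 i)

/-- Coordinates of the gradient are the partial derivatives. -/
lemma grad_coord (f : E2 → ℝ) (y : E2) (i : Fin 2) :
    gradient f y i = fderiv ℝ f y (e2 i) := by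
  have h : ⟪gradient f y, e2 i⟫ = fderiv ℝ f y (e2 i) := by
    rw [gradient]; exact InnerProductSpace.toDual_symm_apply
  rw [← h, e2, EuclideanSpace.inner_single_right]
  simp

lemma e2_app (i j : Fin 2) : e2 i j = if j = i then (1:ℝ) else 0 := by
  simp [e2, EuclideanSpace.single_apply]

/-- Differentiability of partial derivatives of a `C²` function. -/
lemma diffG {u : E2 → ℝ} {x : E2} (h : ContDiffAt ℝ 2 u x) (i : Fin 2) :
    DifferentiableAt ℝ (fun y => fderiv ℝ u y (e2 i)) x := by
  have h1 : ContDiffAt ℝ 1 (fderiv ℝ u) x := h.fderiv_right (by norm_num)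
  exact (ContinuousLinearMap.apply ℝ ℝ (e2 i)).differentiableAt.comp x
    (h1.differentiableAt (by norm_num))

/-- If `div(x₁∇u) = 0` in `{u > 0} ∩ {x₁ > 0}` and
`div((1/x₁)∇u) = 0` in `{u < 0} ∩ {x₁ > 0}`, then the auxiliary function
`z = x₁u⁺` on `{u > 0}`, `z = u⁻` on `{u ≤ 0}` satisfies the single equation
`Δz - (1/x₁)∂₁z + x₁⁻² z⁺ = 0` classically in each phase in `{x₁ > 0}`. -/
theorem auxiliary_function_equation
    (u : E2 → ℝ) (D : Set E2) (hD : IsOpen D)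
    (hcont : ContinuousOn u (D ∩ {x : E2 | 0 < x 0}))
    (hreg : ContDiffOn ℝ 2 u (D ∩ {x : E2 | 0 < x 0} ∩ {x : E2 | u x ≠ 0}))
    (hPDEp : ∀ x ∈ D ∩ {x : E2 | 0 < x 0} ∩ {x : E2 | 0 < u x},
      div2 (fun y => y 0 • gradient u y) x = 0)
    (hPDEm : ∀ x ∈ D ∩ {x : E2 | 0 < x 0} ∩ {x : E2 | u x < 0},
      div2 (fun y => (y 0)⁻¹ • gradient u y) x = 0)
    (z : E2 → ℝ)
    (hz : z = fun x => if 0 < u x then x 0 * u x else min (u x) 0) :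
    ∀ x ∈ D ∩ {x : E2 | 0 < x 0}, (0 < u x ∨ u x < 0) →
      lap2 z x - (x 0)⁻¹ * fderiv ℝ z x (e2 0) + max (z x) 0 / (x 0) ^ 2 = 0 := by
  intro x hx hphase
  obtain ⟨hxD, hx0⟩ := hx
  have hx0' : (0:ℝ) < x 0 := hx0
  have hx0ne : x 0 ≠ 0 := ne_of_gt hx0'
  have hproj : ∀ y : E2, HasFDerivAt (fun p : E2 => p 0)
      (EuclideanSpace.proj (0 : Fin 2) : E2 →L[ℝ] ℝ) y :=
    fun y => (EuclideanSpace.proj (0 : Fin 2) : E2 →L[ℝ] ℝ).hasFDerivAt (x := y)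
  have hSopen : IsOpen (D ∩ {p : E2 | 0 < p 0}) :=
    hD.inter (isOpen_lt continuous_const (EuclideanSpace.proj (0 : Fin 2)).continuous)
  rcases hphase with hpos | hneg
  · -- positive phase: z = x₁ u near x
    have hVopen : IsOpen ((D ∩ {p : E2 | 0 < p 0}) ∩ u ⁻¹' Ioi 0) :=
      hcont.isOpen_inter_preimage hSopen isOpen_Ioi
    have hxV : x ∈ (D ∩ {p : E2 | 0 < p 0}) ∩ u ⁻¹' Ioi 0 := ⟨⟨hxD, hx0⟩, hpos⟩
    have hVmem : (D ∩ {p : E2 | 0 < p 0}) ∩ u ⁻¹' Ioi 0 ∈ 𝓝 x := hVopen.mem_nhds hxV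
    have hC2 : ∀ y ∈ (D ∩ {p : E2 | 0 < p 0}) ∩ u ⁻¹' Ioi 0, ContDiffAt ℝ 2 u y := by
      intro y hy
      have hy' : y ∈ D ∩ {p : E2 | 0 < p 0} ∩ {p : E2 | u p ≠ 0} :=
        ⟨hy.1, ne_of_gt (show (0:ℝ) < u y from hy.2)⟩
      exact (hreg y hy').contDiffAt (Filter.mem_of_superset (hVopen.mem_nhds hy)
        (fun p hp => ⟨hp.1, ne_of_gt (show (0:ℝ) < u p from hp.2)⟩))
    have hdu : ∀ y ∈ (D ∩ {p : E2 | 0 < p 0}) ∩ u ⁻¹' Ioi 0, DifferentiableAt ℝ u y :=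
      fun y hy => (hC2 y hy).differentiableAt (by norm_num)
    have hGdiff : ∀ i : Fin 2, DifferentiableAt ℝ (fun y => fderiv ℝ u y (e2 i)) x :=
      diffG (hC2 x hxV)
    -- z equals x₁ u near x
    have hzw : z =ᶠ[𝓝 x] fun p : E2 => p 0 * u p := by
      filter_upwards [hVmem] with y hy
      rw [hz]
      exact if_pos (show (0:ℝ) < u y from hy.2)
    -- first derivatives of z near x
    have hkey : ∀ i : Fin 2, (fun y => fderiv ℝ z y (e2 i)) =ᶠ[𝓝 x]
        (fun y => y 0 * fderiv ℝ u y (e2 i) + u y * e2 i 0) := by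
      intro i
      filter_upwards [hzw.fderiv (𝕜 := ℝ), hVmem] with y h1 h2
      rw [h1, HasFDerivAt.fderiv (f := fun p : E2 => p 0 * u p)
        ((hproj y).mul ((hdu y h2).hasFDerivAt))]
      simp only [ContinuousLinearMap.add_apply, ContinuousLinearMap.smul_apply, smul_eq_mul,
        PiLp.proj_apply]
    -- derivative of the product x₁ ∂ᵢu at x
    have hdermul : ∀ i : Fin 2, HasFDerivAt (fun y : E2 => y 0 * fderiv ℝ u y (e2 i))
        ((x 0) • fderiv ℝ (fun y => fderiv ℝ u y (e2 i)) x
          + (fderiv ℝ u x (e2 i)) • (EuclideanSpace.proj (0 : Fin 2) : E2 →L[ℝ] ℝ)) x :=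
      fun i => (hproj x).mul ((hGdiff i).hasFDerivAt)
    have hderu : HasFDerivAt u (fderiv ℝ u x) x := (hdu x hxV).hasFDerivAt
    -- second derivatives of z at x
    have hlap : ∀ i : Fin 2, fderiv ℝ (fun y => fderiv ℝ z y (e2 i)) x (e2 i)
        = x 0 * fderiv ℝ (fun y => fderiv ℝ u y (e2 i)) x (e2 i)
          + 2 * (fderiv ℝ u x (e2 i) * e2 i 0) := by
      intro i
      rw [(hkey i).fderiv_eq, HasFDerivAt.fderiv
        (f := fun y : E2 => y 0 * fderiv ℝ u y (e2 i) + u y * e2 i 0)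
        ((hdermul i).add (hderu.mul_const (e2 i 0)))]
      simp only [ContinuousLinearMap.add_apply, ContinuousLinearMap.smul_apply, smul_eq_mul,
        PiLp.proj_apply]
      show _ + e2 i 0 * _ = _
      ring
    -- the PDE in the positive phase
    have hdiv0 := hPDEp x ⟨⟨hxD, hx0⟩, hpos⟩
    have hdiv : div2 (fun y => y 0 • gradient u y) x
        = (x 0 * fderiv ℝ (fun y => fderiv ℝ u y (e2 0)) x (e2 0) + fderiv ℝ u x (e2 0))
          + x 0 * fderiv ℝ (fun y => fderiv ℝ u y (e2 1)) x (e2 1) := by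
      have hfe : ∀ i : Fin 2, (fun y : E2 => (y 0 • gradient u y) i)
          = fun y : E2 => y 0 * fderiv ℝ u y (e2 i) := by
        intro i; funext y
        show y 0 * gradient u y i = _
        rw [grad_coord]
      rw [div2, Fin.sum_univ_two, hfe 0, hfe 1, (hdermul 0).fderiv, (hdermul 1).fderiv]
      simp only [ContinuousLinearMap.add_apply, ContinuousLinearMap.smul_apply, smul_eq_mul,
        PiLp.proj_apply]
      simp [e2_app]
    rw [hdiv] at hdiv0
    -- assemble
    have hz1 : fderiv ℝ z x (e2 0) = x 0 * fderiv ℝ u x (e2 0) + u x := by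
      have h := (hkey 0).self_of_nhds
      simpa [e2_app] using h
    have hzx : z x = x 0 * u x := by rw [hz]; exact if_pos hpos
    have hmax : max (z x) 0 = x 0 * u x := by
      rw [hzx]; exact max_eq_left (le_of_lt (mul_pos hx0' hpos))
    rw [lap2, Fin.sum_univ_two, hlap 0, hlap 1, hz1, hmax]
    simp only [e2_app]
    norm_num
    field_simp
    linear_combination (x 0) * hdiv0
  · -- negative phase: z = u near x
    have hVopen : IsOpen ((D ∩ {p : E2 | 0 < p 0}) ∩ u ⁻¹' Iio 0) :=
      hcont.isOpen_inter_preimage hSopen isOpen_Iio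
    have hxV : x ∈ (D ∩ {p : E2 | 0 < p 0}) ∩ u ⁻¹' Iio 0 := ⟨⟨hxD, hx0⟩, hneg⟩
    have hVmem : (D ∩ {p : E2 | 0 < p 0}) ∩ u ⁻¹' Iio 0 ∈ 𝓝 x := hVopen.mem_nhds hxV
    have hC2 : ∀ y ∈ (D ∩ {p : E2 | 0 < p 0}) ∩ u ⁻¹' Iio 0, ContDiffAt ℝ 2 u y := by
      intro y hy
      have hy' : y ∈ D ∩ {p : E2 | 0 < p 0} ∩ {p : E2 | u p ≠ 0} :=
        ⟨hy.1, ne_of_lt (show u y < 0 from hy.2)⟩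
      exact (hreg y hy').contDiffAt (Filter.mem_of_superset (hVopen.mem_nhds hy)
        (fun p hp => ⟨hp.1, ne_of_lt (show u p < 0 from hp.2)⟩))
    have hGdiff : ∀ i : Fin 2, DifferentiableAt ℝ (fun y => fderiv ℝ u y (e2 i)) x :=
      diffG (hC2 x hxV)
    have hzw : z =ᶠ[𝓝 x] u := by
      filter_upwards [hVmem] with y hy
      have hneg' : u y < 0 := hy.2
      rw [hz]
      simp only [if_neg (not_lt.mpr (le_of_lt hneg'))]
      exact min_eq_left (le_of_lt hneg')
    -- derivative of the product x₁⁻¹ ∂ᵢu at x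
    have hinv : HasFDerivAt (fun y : E2 => (y 0)⁻¹)
        (-((x 0) ^ 2)⁻¹ • (EuclideanSpace.proj (0 : Fin 2) : E2 →L[ℝ] ℝ)) x :=
      (hasDerivAt_inv hx0ne).comp_hasFDerivAt x (hproj x)
    have hdermul : ∀ i : Fin 2, HasFDerivAt (fun y : E2 => (y 0)⁻¹ * fderiv ℝ u y (e2 i))
        (((x 0)⁻¹) • fderiv ℝ (fun y => fderiv ℝ u y (e2 i)) x
          + (fderiv ℝ u x (e2 i)) • (-((x 0) ^ 2)⁻¹ •
            (EuclideanSpace.proj (0 : Fin 2) : E2 →L[ℝ] ℝ))) x :=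
      fun i => hinv.mul ((hGdiff i).hasFDerivAt)
    have hdiv0 := hPDEm x ⟨⟨hxD, hx0⟩, hneg⟩
    have hdiv : div2 (fun y => (y 0)⁻¹ • gradient u y) x
        = ((x 0)⁻¹ * fderiv ℝ (fun y => fderiv ℝ u y (e2 0)) x (e2 0)
            - ((x 0) ^ 2)⁻¹ * fderiv ℝ u x (e2 0))
          + (x 0)⁻¹ * fderiv ℝ (fun y => fderiv ℝ u y (e2 1)) x (e2 1) := by
      have hfe : ∀ i : Fin 2, (fun y : E2 => ((y 0)⁻¹ • gradient u y) i)
          = fun y : E2 => (y 0)⁻¹ * fderiv ℝ u y (e2 i) := by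
        intro i; funext y
        show (y 0)⁻¹ * gradient u y i = _
        rw [grad_coord]
      rw [div2, Fin.sum_univ_two, hfe 0, hfe 1, (hdermul 0).fderiv, (hdermul 1).fderiv]
      simp only [ContinuousLinearMap.add_apply, ContinuousLinearMap.smul_apply, smul_eq_mul,
        ContinuousLinearMap.neg_apply, PiLp.proj_apply]
      simp [e2_app]
      ring
    rw [hdiv] at hdiv0
    have hlap : ∀ i : Fin 2, fderiv ℝ (fun y => fderiv ℝ z y (e2 i)) x (e2 i)
        = fderiv ℝ (fun y => fderiv ℝ u y (e2 i)) x (e2 i) := by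
      intro i
      have h1 : (fun y => fderiv ℝ z y (e2 i)) =ᶠ[𝓝 x] (fun y => fderiv ℝ u y (e2 i)) := by
        filter_upwards [hzw.fderiv (𝕜 := ℝ)] with y hy; rw [hy]
      rw [h1.fderiv_eq]
    have hz1 : fderiv ℝ z x (e2 0) = fderiv ℝ u x (e2 0) := by rw [hzw.fderiv_eq]
    have hmax : max (z x) 0 = 0 := by
      have hzx : z x = u x := hzw.self_of_nhds
      rw [hzx]; exact max_eq_right (le_of_lt hneg)
    rw [lap2, Fin.sum_univ_two, hlap 0, hlap 1, hz1, hmax]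
    rw [zero_div, add_zero]
    have h2 : (x 0) ^ 2 ≠ 0 := pow_ne_zero _ hx0ne
    have hkey2 : (x 0) * fderiv ℝ (fun y => fderiv ℝ u y (e2 0)) x (e2 0)
        + (x 0) * fderiv ℝ (fun y => fderiv ℝ u y (e2 1)) x (e2 1)
        = fderiv ℝ u x (e2 0) := by
      apply mul_left_cancel₀ h2
      field_simp at hdiv0
      ring_nf
      ring_nf at hdiv0
      linear_combination (x 0) ^ 2 * hdiv0
    rw [sub_eq_zero, ← hkey2]
    field_simp

end
end
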